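/- arXiv:2102.00491 — 3 statements merged into one kernel-verified Lean document; each statement's English description precedes it below -/
import Mathlib

section
/- Let F : L²(D₁) → L²(D₂) be a Hilbert–Schmidt operator with SVD F f = ∑_j σ_j ⟨v_j, f⟩ u_j. Fix k ≥ 1, let V₁ = [v_1 | ⋯ | v_k] and V₂ = [v_{k+1} | v_{k+2} | ⋯ ] be quasimatrices of right singular functions, and let Σ₂ be the infinite diagonal matrix with entries σ_{k+1}, σ_{k+2}, …. Let Ω be any D₁ × ℓ quasimatrix, Y = FΩ, Ω₁ = V₁*Ω (a k × ℓ matrix with entries ⟨v_i, ω_j⟩), and Ω₂ = V₂*Ω. If Ω₁ has full rank, then ‖F − P_Y F‖_HS² ≤ ‖Σ₂‖_HS² + ‖Σ₂ Ω₂ Ω₁†‖_HS², where Ω₁† is the Moore–Penrose pseudoinverse of Ω₁ and ‖Σ₂‖_HS² = ∑_{j=k+1}^∞ σ_j². -/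
open MeasureTheory Matrix RealInnerProductSpace

/-- The orthogonal projection of a real inner product space onto the span of finitely
many vectors `Y`. -/
noncomputable def projSpan {H : Type*} [NormedAddCommGroup H] [InnerProductSpace ℝ H]
    {m : ℕ} (Y : Fin m → H) : H → H := fun x =>
  haveI : FiniteDimensional ℝ (Submodule.span ℝ (Set.range Y)) :=
    FiniteDimensional.span_of_finite ℝ (Set.finite_range Y)
  haveI : CompleteSpace (Submodule.span ℝ (Set.range Y)) :=
    FiniteDimensional.complete ℝ _
  (Submodule.orthogonalProjection (Submodule.span ℝ (Set.range Y)) x : H)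

/-- The Moore–Penrose pseudoinverse of a `k × ℓ` matrix of full row rank:
`M† = Mᵀ (M Mᵀ)⁻¹`. -/
noncomputable def pinvRow {k l : ℕ} (M : Matrix (Fin k) (Fin l) ℝ) :
    Matrix (Fin l) (Fin k) ℝ :=
  Mᵀ * (M * Mᵀ)⁻¹

private lemma ortho_hasSum_parseval {H : Type*} [NormedAddCommGroup H] [InnerProductSpace ℝ H]
    {u : ℕ → H} (hu : Orthonormal ℝ u) {c : ℕ → ℝ} {x : H}
    (hx : HasSum (fun n => c n • u n) x) :
    HasSum (fun n => c n ^ 2) (‖x‖ ^ 2) := by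
  have hite := orthonormal_iff_ite.mp hu
  have hcoord : ∀ m, ⟪u m, x⟫ = c m := by
    intro m
    have h1 : HasSum (fun n => ⟪u m, c n • u n⟫) ⟪u m, x⟫ := (innerSL ℝ (u m)).hasSum hx
    have h2 : HasSum (fun n => ⟪u m, c n • u n⟫) (c m) := by
      have he : (fun n => ⟪u m, c n • u n⟫) = fun n => if n = m then c m else 0 := by
        funext n
        rw [real_inner_smul_right, hite m n]
        rcases eq_or_ne n m with rfl | h
        · simp
        · simp [h, Ne.symm h]
      rw [he]
      exact hasSum_ite_eq m (c m)
    exact h1.unique h2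
  have h3 : HasSum (fun n => ⟪x, c n • u n⟫) ⟪x, x⟫ := (innerSL ℝ x).hasSum hx
  have h4 : (fun n => ⟪x, c n • u n⟫) = fun n => c n ^ 2 := by
    funext n
    rw [real_inner_smul_right, real_inner_comm, hcoord n]
    ring
  rw [h4] at h3
  rwa [real_inner_self_eq_norm_sq] at h3

private lemma ortho_summable_smul {H : Type*} [NormedAddCommGroup H] [InnerProductSpace ℝ H]
    [CompleteSpace H] {u : ℕ → H} (hu : Orthonormal ℝ u) {c : ℕ → ℝ}
    (hc : Summable fun n => c n ^ 2) : Summable fun n => c n • u n := by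
  rw [summable_iff_vanishing_norm]
  intro ε hε
  obtain ⟨s, hs⟩ := summable_iff_vanishing_norm.1 hc (ε ^ 2) (by positivity)
  refine ⟨s, fun t ht => ?_⟩
  have hpar : ‖∑ n ∈ t, c n • u n‖ ^ 2 = ∑ n ∈ t, c n ^ 2 := by
    rw [← real_inner_self_eq_norm_sq, hu.inner_sum]
    simp [sq]
  have h2 : ∑ n ∈ t, c n ^ 2 < ε ^ 2 :=
    lt_of_abs_lt (by rw [← Real.norm_eq_abs]; exact hs t ht)
  exact lt_of_pow_lt_pow_left₀ 2 hε.le (hpar ▸ h2)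

/-- deterministic error bound for the randomized SVD of a
Hilbert–Schmidt operator. Let `F : H₁ → H₂` be a Hilbert–Schmidt operator with
(complete) SVD `F f = ∑_j σ_j ⟨v_j, f⟩ u_j` (indexed from `0`, so `σ_j` here is
`σ_{j+1}` of the paper). Fix `k ≥ 1`, let `Ω` be any `ℓ`-column quasimatrix with columns
in `H₁`, `Y = FΩ`, `Ω₁ = V₁*Ω` and `Ω₂ = V₂*Ω`. If `Ω₁` has full rank, then
`‖F − P_Y F‖²_HS ≤ ‖Σ₂‖²_HS + ‖Σ₂ Ω₂ Ω₁†‖²_HS`, where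
`‖Σ₂‖²_HS = ∑_{j≥k} σ_j²`. -/
theorem stmt_4 {H1 H2 : Type*}
    [NormedAddCommGroup H1] [InnerProductSpace ℝ H1] [CompleteSpace H1]
    [NormedAddCommGroup H2] [InnerProductSpace ℝ H2] [CompleteSpace H2]
    (F : H1 →L[ℝ] H2)
    (σ : ℕ → ℝ) (hσanti : Antitone σ) (hσnn : ∀ j, 0 ≤ σ j)
    (hσsum : Summable fun j => σ j ^ 2)
    (v : ℕ → H1) (u : ℕ → H2) (hv : Orthonormal ℝ v) (hu : Orthonormal ℝ u)
    (hvtot : (Submodule.span ℝ (Set.range v)).topologicalClosure = ⊤)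
    (hSVD : ∀ f, F f = ∑' j, (σ j * ⟪v j, f⟫) • u j)
    (k l : ℕ) (hk : 1 ≤ k) (hl : 1 ≤ l)
    (W : Fin l → H1)
    (Y : Fin l → H2) (hY : Y = fun j => F (W j))
    (Ω₁ : Matrix (Fin k) (Fin l) ℝ) (hΩ₁ : Ω₁ = Matrix.of fun (i : Fin k) (j : Fin l) => ⟪v i.val, W j⟫)
    (Ω₂ : ℕ → Fin l → ℝ) (hΩ₂ : Ω₂ = fun n j => ⟪v (k + n), W j⟫)
    (hrank : Ω₁.rank = k) :
    ∑' n, ‖F (v n) - projSpan Y (F (v n))‖ ^ 2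
      ≤ (∑' n, σ (k + n) ^ 2) +
        ∑' n, ∑ i : Fin k, (σ (k + n) * ∑ j, Ω₂ n j * pinvRow Ω₁ j i) ^ 2 := by
  classical
  set q : ℕ → Fin k → ℝ :=
    fun n i => (σ (k + n) * ∑ j, Ω₂ n j * pinvRow Ω₁ j i) ^ 2 with hq
  set A : ℕ → ℝ := fun n => ‖F (v n) - projSpan Y (F (v n))‖ ^ 2 with hA
  have hvite := orthonormal_iff_ite.mp hv
  -- Bessel
  have bessel : ∀ f : H1, Summable fun n => ⟪v n, f⟫ ^ 2 := by
    intro f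
    have := hv.inner_products_summable (x := f)
    simpa [Real.norm_eq_abs, sq_abs] using this
  have gsum : ∀ f : H1, Summable fun n => (σ n * ⟪v n, f⟫) • u n := by
    intro f
    apply ortho_summable_smul hu
    refine Summable.of_nonneg_of_le (fun n => sq_nonneg _) (fun n => ?_)
      ((bessel f).mul_left (σ 0 ^ 2))
    have h1 : σ n ^ 2 ≤ σ 0 ^ 2 := pow_le_pow_left₀ (hσnn n) (hσanti (Nat.zero_le n)) 2
    have h2 : (0:ℝ) ≤ ⟪v n, f⟫ ^ 2 := sq_nonneg _
    calc (σ n * ⟪v n, f⟫) ^ 2 = σ n ^ 2 * ⟪v n, f⟫ ^ 2 := by ring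
      _ ≤ σ 0 ^ 2 * ⟪v n, f⟫ ^ 2 := mul_le_mul_of_nonneg_right h1 h2
  have hF : ∀ f : H1, HasSum (fun n => (σ n * ⟪v n, f⟫) • u n) (F f) := by
    intro f
    have := (gsum f).hasSum
    rwa [← hSVD f] at this
  have hFv : ∀ n, F (v n) = σ n • u n := by
    intro n
    rw [hSVD (v n), tsum_eq_single n]
    · simp [hvite, hv.1 n]
    · intro m hm
      simp [hvite, hm]
  have hnormFv : ∀ n, ‖F (v n)‖ = σ n := by
    intro n
    rw [hFv n, norm_smul, hu.1 n, mul_one, Real.norm_eq_abs, abs_of_nonneg (hσnn n)]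
  -- projection minimality
  haveI : FiniteDimensional ℝ (Submodule.span ℝ (Set.range Y)) :=
    FiniteDimensional.span_of_finite ℝ (Set.finite_range Y)
  haveI : CompleteSpace (Submodule.span ℝ (Set.range Y)) :=
    FiniteDimensional.complete ℝ _
  have hproj : ∀ x y : H2, y ∈ Submodule.span ℝ (Set.range Y) →
      ‖x - projSpan Y x‖ ≤ ‖x - y‖ := by
    intro x y hy
    show ‖x - (Submodule.orthogonalProjection (Submodule.span ℝ (Set.range Y)) x : H2)‖ ≤ _
    rw [← Submodule.starProjection_apply, Submodule.starProjection_minimal]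
    exact ciInf_le ⟨0, by rintro _ ⟨w, rfl⟩; exact norm_nonneg _⟩
      (⟨y, hy⟩ : Submodule.span ℝ (Set.range Y))
  have hAle : ∀ n, A n ≤ σ n ^ 2 := by
    intro n
    have h1 : ‖F (v n) - projSpan Y (F (v n))‖ ≤ ‖F (v n)‖ := by
      have := hproj (F (v n)) 0 (Submodule.zero_mem _)
      simpa using this
    calc A n ≤ ‖F (v n)‖ ^ 2 := pow_le_pow_left₀ (norm_nonneg _) h1 2
      _ = σ n ^ 2 := by rw [hnormFv n]
  have hAsum : Summable A := Summable.of_nonneg_of_le (fun n => sq_nonneg _) hAle hσsum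
  -- matrix facts
  have hBunit : IsUnit (Ω₁ * Ω₁ᵀ).det := by
    have hrk : (Ω₁ * Ω₁ᵀ).rank = k := by
      rw [Matrix.rank_self_mul_transpose]; exact hrank
    have htop : LinearMap.range (Ω₁ * Ω₁ᵀ).mulVecLin = ⊤ := by
      apply Submodule.eq_top_of_finrank_eq
      unfold Matrix.rank at hrk
      rw [hrk, Module.finrank_fin_fun]
    have hsurj : Function.Surjective (Ω₁ * Ω₁ᵀ).mulVec := by
      intro y
      obtain ⟨x, hx⟩ := LinearMap.range_eq_top.mp htop y
      exact ⟨x, hx⟩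
    exact (Matrix.isUnit_iff_isUnit_det _).mp (Matrix.mulVec_surjective_iff_isUnit.mp hsurj)
  have hOP : Ω₁ * pinvRow Ω₁ = 1 := by
    rw [pinvRow, ← Matrix.mul_assoc, Matrix.mul_nonsing_inv _ hBunit]
  -- the key head estimate
  have key : ∀ i : Fin k, Summable (fun n => q n i) ∧ A i.val ≤ ∑' n, q n i := by
    intro i
    set yhat : H2 := ∑ j, pinvRow Ω₁ j i • Y j with hyhat
    have hymem : yhat ∈ Submodule.span ℝ (Set.range Y) :=
      Submodule.sum_mem _ fun j _ =>
        Submodule.smul_mem _ _ (Submodule.subset_span ⟨j, rfl⟩)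
    set d : ℕ → ℝ := fun m =>
      (if m = i.val then σ m else 0) - σ m * ∑ j, pinvRow Ω₁ j i * ⟪v m, W j⟫ with hd
    have hsum_d : HasSum (fun m => d m • u m) (F (v i.val) - yhat) := by
      have h1 : HasSum (fun m => (if m = i.val then σ m else 0) • u m) (F (v i.val)) := by
        rw [hFv]
        have he : (fun m => (if m = i.val then σ m else 0) • u m)
            = fun m => if m = i.val then σ i.val • u i.val else 0 := by
          funext m
          split
          · next h => subst h; rfl
          · simp
        rw [he]
        exact hasSum_ite_eq i.val _
      have h2 : HasSum
          (fun m => ∑ j, pinvRow Ω₁ j i • ((σ m * ⟪v m, W j⟫) • u m)) yhat := by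
        rw [hyhat, hY]
        exact hasSum_sum fun j _ => (hF (W j)).const_smul _
      have hfun : (fun m => d m • u m)
          = fun m => (if m = i.val then σ m else 0) • u m
              - ∑ j, pinvRow Ω₁ j i • ((σ m * ⟪v m, W j⟫) • u m) := by
        funext m
        simp only [hd, sub_smul, smul_smul, ← Finset.sum_smul]
        congr 2
        rw [Finset.mul_sum]
        exact Finset.sum_congr rfl fun j _ => by ring
      rw [hfun]
      exact h1.sub h2
    have hdzero : ∀ m (hm : m < k), d m = 0 := by
      intro m hm
      have hOm : ∑ j, pinvRow Ω₁ j i * ⟪v m, W j⟫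
          = if (⟨m, hm⟩ : Fin k) = i then 1 else 0 := by
        have h := congrArg (fun M => M ⟨m, hm⟩ i) hOP
        simp only [Matrix.mul_apply, Matrix.one_apply] at h
        rw [← h, hΩ₁]
        exact Finset.sum_congr rfl fun j _ => by simp [Matrix.of_apply, mul_comm]
      simp only [hd, hOm]
      rcases eq_or_ne (⟨m, hm⟩ : Fin k) i with h | h
      · have hm' : m = i.val := by rw [← h]
        simp [hm', h]
      · have hm' : m ≠ i.val := fun hc => h (Fin.ext hc)
        simp [hm', h]
    have hpar := ortho_hasSum_parseval hu hsum_d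
    have hds : Summable fun m => d m ^ 2 := hpar.summable
    have htail : ∀ n, d (n + k) ^ 2 = q n i := by
      intro n
      have h1 : ¬(n + k = i.val) := by have := i.isLt; omega
      have h2 : ∑ j, pinvRow Ω₁ j i * ⟪v (n + k), W j⟫
          = ∑ j, Ω₂ n j * pinvRow Ω₁ j i := by
        rw [hΩ₂]
        exact Finset.sum_congr rfl fun j _ => by rw [add_comm n k]; ring
      simp only [hd, hq, if_neg h1, zero_sub, h2]
      rw [add_comm n k]
      ring
    have hqsum : Summable fun n => q n i :=
      (((summable_nat_add_iff k).mpr hds).congr htail)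
    have hteq : ‖F (v i.val) - yhat‖ ^ 2 = ∑' n, q n i := by
      calc ‖F (v i.val) - yhat‖ ^ 2 = ∑' m, d m ^ 2 := hpar.tsum_eq.symm
        _ = (∑ m ∈ Finset.range k, d m ^ 2) + ∑' n, d (n + k) ^ 2 :=
            (Summable.sum_add_tsum_nat_add k hds).symm
        _ = ∑' n, q n i := by
            rw [Finset.sum_eq_zero, zero_add]
            · exact tsum_congr htail
            · intro m hm
              rw [hdzero m (Finset.mem_range.mp hm)]
              ring
    refine ⟨hqsum, ?_⟩
    rw [← hteq]
    exact pow_le_pow_left₀ (norm_nonneg _) (hproj _ _ hymem) 2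
  -- assembly
  have hAtail : Summable fun n => A (n + k) := (summable_nat_add_iff k).mpr hAsum
  have hσtail : Summable fun n => σ (k + n) ^ 2 :=
    ((summable_nat_add_iff k).mpr hσsum).congr fun n => by rw [add_comm]
  have hhead : (∑ m ∈ Finset.range k, A m) ≤ ∑' n, ∑ i : Fin k, q n i := by
    calc ∑ m ∈ Finset.range k, A m = ∑ i : Fin k, A i.val :=
          (Fin.sum_univ_eq_sum_range (fun m => A m) k).symm
      _ ≤ ∑ i : Fin k, ∑' n, q n i := Finset.sum_le_sum fun i _ => (key i).2
      _ = ∑' n, ∑ i : Fin k, q n i := (Summable.tsum_finsetSum fun i _ => (key i).1).symm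
  have htail : (∑' n, A (n + k)) ≤ ∑' n, σ (k + n) ^ 2 := by
    refine Summable.tsum_le_tsum (fun n => ?_) hAtail hσtail
    rw [add_comm k n]
    exact hAle (n + k)
  calc ∑' n, A n = (∑ m ∈ Finset.range k, A m) + ∑' n, A (n + k) :=
        (Summable.sum_add_tsum_nat_add k hAsum).symm
    _ ≤ (∑' n, ∑ i : Fin k, q n i) + ∑' n, σ (k + n) ^ 2 := add_le_add hhead htail
    _ = (∑' n, σ (k + n) ^ 2) + ∑' n, ∑ i : Fin k, q n i := add_comm _ _
end

section
/- Let Ω = [ω_1 | ⋯ | ω_ℓ] be a D₁ × ℓ quasimatrix whose columns are independent random functions drawn from GP(0,K), with ℓ ≥ k ≥ 1, and let Ω₂ = V₂*Ω, where V₂ is any quasimatrix with (countably many) orthonormal columns in L²(D₁). Then for all s ≥ 1, P{ ‖Ω₂‖_HS² > ℓ s² Tr(K) } ≤ (s e^{−(s²−1)/2})^ℓ. -/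
open MeasureTheory ProbabilityTheory RealInnerProductSpace
open scoped ENNReal

lemma aux_indepFun_of_measurable {Ω : Type*} {mΩ : MeasurableSpace Ω} {μ : Measure Ω}
    {m₁ m₂ : MeasurableSpace Ω} (h : Indep m₁ m₂ μ) {f g : Ω → ℝ≥0∞}
    (hf : Measurable[m₁] f) (hg : Measurable[m₂] g) : IndepFun f g μ := by
  rw [IndepFun_iff]
  rintro t1 t2 ⟨s1, hs1, rfl⟩ ⟨s2, hs2, rfl⟩
  exact (Indep_iff _ _ _).1 h _ _ (hf hs1) (hg hs2)

lemma aux_gauss_lintegral {θ s : ℝ} (hs : 1 ≤ s) (hθ : θ = (1 - 1 / s ^ 2) / 2) :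
    ∫⁻ x, ENNReal.ofReal (Real.exp (θ * x ^ 2)) ∂(gaussianReal 0 1) = ENNReal.ofReal s := by
  have hs0 : (0:ℝ) < s := lt_of_lt_of_le one_pos hs
  have hb : (0:ℝ) < 1 / (2 * s ^ 2) := by positivity
  have hfun : ∀ x : ℝ, gaussianPDFReal 0 1 x * Real.exp (θ * x ^ 2)
      = (Real.sqrt (2 * Real.pi))⁻¹ * Real.exp (-(1 / (2 * s ^ 2)) * x ^ 2) := by
    intro x
    simp only [gaussianPDFReal, NNReal.coe_one, mul_one, sub_zero]
    rw [mul_assoc, ← Real.exp_add]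
    congr 2
    rw [hθ]
    field_simp
    ring
  have hint : Integrable (fun x => gaussianPDFReal 0 1 x * Real.exp (θ * x ^ 2)) :=
    (((integrable_exp_neg_mul_sq hb).const_mul ((Real.sqrt (2 * Real.pi))⁻¹)).congr
      (Filter.Eventually.of_forall fun x => (hfun x).symm))
  have hnn : (fun _ => (0:ℝ)) ≤ᵐ[volume] fun x => gaussianPDFReal 0 1 x * Real.exp (θ * x ^ 2) :=
    Filter.Eventually.of_forall fun x =>
      mul_nonneg (gaussianPDFReal_nonneg 0 1 x) (Real.exp_pos _).le
  have hmeas : Measurable fun x : ℝ => ENNReal.ofReal (Real.exp (θ * x ^ 2)) :=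
    (Real.measurable_exp.comp ((measurable_id.pow_const 2).const_mul θ)).ennreal_ofReal
  rw [gaussianReal_of_var_ne_zero 0 one_ne_zero,
    lintegral_withDensity_eq_lintegral_mul _ (measurable_gaussianPDF 0 1) hmeas]
  simp_rw [Pi.mul_apply, gaussianPDF, ← ENNReal.ofReal_mul (gaussianPDFReal_nonneg 0 1 _)]
  rw [← ofReal_integral_eq_lintegral_ofReal hint hnn]
  congr 1
  calc ∫ x, gaussianPDFReal 0 1 x * Real.exp (θ * x ^ 2)
      = ∫ x, (Real.sqrt (2 * Real.pi))⁻¹ * Real.exp (-(1 / (2 * s ^ 2)) * x ^ 2) := by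
        exact integral_congr_ae (Filter.Eventually.of_forall hfun)
    _ = (Real.sqrt (2 * Real.pi))⁻¹ * ∫ x, Real.exp (-(1 / (2 * s ^ 2)) * x ^ 2) := by
        rw [integral_const_mul]
    _ = (Real.sqrt (2 * Real.pi))⁻¹ * Real.sqrt (Real.pi / (1 / (2 * s ^ 2))) := by
        rw [integral_gaussian]
    _ = s := by
        have h1 : Real.pi / (1 / (2 * s ^ 2)) = (2 * Real.pi) * s ^ 2 := by
          field_simp
        rw [h1, Real.sqrt_mul (show (0:ℝ) ≤ 2 * Real.pi by positivity) (s ^ 2),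
          Real.sqrt_sq hs0.le,
          inv_mul_cancel_left₀ (ne_of_gt (Real.sqrt_pos.2 (by positivity)))]

lemma aux_jensen (lam : ℕ → ℝ) (hlam_pos : ∀ n, 0 < lam n) (hlam_sum : Summable lam)
    (θ : ℝ) (hθ0 : 0 ≤ θ) (x : ℕ → ℝ) :
    ENNReal.ofReal (Real.exp (θ * (∑' n, lam n * x n ^ 2) / (∑' n, lam n)))
      ≤ ∑' n, ENNReal.ofReal (lam n / (∑' n, lam n) * Real.exp (θ * x n ^ 2)) := by
  set T := ∑' n, lam n with hTdef
  have hT : 0 < T := Summable.tsum_pos hlam_sum (fun n => (hlam_pos n).le) 0 (hlam_pos 0)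
  have hw_nonneg : ∀ n, (0:ℝ) ≤ lam n / T := fun n => div_nonneg (hlam_pos n).le hT.le
  have hw_sum : Summable (fun n => lam n / T) := hlam_sum.div_const T
  have hw_tsum : ∑' n, lam n / T = 1 := by rw [tsum_div_const, div_self hT.ne']
  by_cases hsum : Summable (fun n => lam n * x n ^ 2)
  · by_cases htop : (∑' n, ENNReal.ofReal (lam n / T * Real.exp (θ * x n ^ 2))) = ⊤
    · rw [htop]; exact le_top
    · have hr_nonneg : ∀ n, (0:ℝ) ≤ lam n / T * Real.exp (θ * x n ^ 2) :=
        fun n => mul_nonneg (hw_nonneg n) (Real.exp_pos _).le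
      have hr_sum : Summable (fun n => lam n / T * Real.exp (θ * x n ^ 2)) := by
        have h1 := ENNReal.summable_toReal htop
        refine h1.congr fun n => ?_
        rw [ENNReal.toReal_ofReal (hr_nonneg n)]
      rw [← ENNReal.ofReal_tsum_of_nonneg hr_nonneg hr_sum]
      apply ENNReal.ofReal_le_ofReal
      set S := θ * (∑' n, lam n * x n ^ 2) / T with hSdef
      have hls : Summable (fun n =>
          Real.exp S * ((1 - S) * (lam n / T) + θ / T * (lam n * x n ^ 2))) :=
        (((hw_sum.mul_left (1 - S)).add (hsum.mul_left (θ / T))).mul_left (Real.exp S))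
      have key : ∀ n, Real.exp S * ((1 - S) * (lam n / T) + θ / T * (lam n * x n ^ 2))
          ≤ lam n / T * Real.exp (θ * x n ^ 2) := by
        intro n
        have h1 : Real.exp S * (1 + (θ * x n ^ 2 - S)) ≤ Real.exp (θ * x n ^ 2) := by
          have h2 := Real.add_one_le_exp (θ * x n ^ 2 - S)
          calc Real.exp S * (1 + (θ * x n ^ 2 - S))
              ≤ Real.exp S * Real.exp (θ * x n ^ 2 - S) := by
                apply mul_le_mul_of_nonneg_left _ (Real.exp_pos S).le
                linarith
            _ = Real.exp (θ * x n ^ 2) := by rw [← Real.exp_add]; congr 1; ring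
        have h3 := mul_le_mul_of_nonneg_left h1 (hw_nonneg n)
        calc Real.exp S * ((1 - S) * (lam n / T) + θ / T * (lam n * x n ^ 2))
            = lam n / T * (Real.exp S * (1 + (θ * x n ^ 2 - S))) := by
              have h4 : θ / T * (lam n * x n ^ 2) = lam n / T * (θ * x n ^ 2) := by ring
              rw [h4]; ring
          _ ≤ lam n / T * Real.exp (θ * x n ^ 2) := h3
      calc Real.exp S
          = ∑' n, Real.exp S * ((1 - S) * (lam n / T) + θ / T * (lam n * x n ^ 2)) := by
            rw [tsum_mul_left, Summable.tsum_add (hw_sum.mul_left (1 - S)) (hsum.mul_left (θ / T)),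
              tsum_mul_left, tsum_mul_left, hw_tsum, hSdef]
            field_simp
            try ring
        _ ≤ ∑' n, lam n / T * Real.exp (θ * x n ^ 2) := Summable.tsum_le_tsum key hls hr_sum
  · rw [tsum_eq_zero_of_not_summable hsum]
    have h0 : θ * 0 / T = 0 := by ring
    rw [h0, Real.exp_zero]
    calc (ENNReal.ofReal 1) = ∑' n, ENNReal.ofReal (lam n / T) := by
          rw [← ENNReal.ofReal_tsum_of_nonneg hw_nonneg hw_sum, hw_tsum]
      _ ≤ ∑' n, ENNReal.ofReal (lam n / T * Real.exp (θ * x n ^ 2)) := by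
          apply ENNReal.tsum_le_tsum
          intro n
          apply ENNReal.ofReal_le_ofReal
          have h1 : 1 ≤ Real.exp (θ * x n ^ 2) := by
            rw [← Real.exp_zero]
            exact Real.exp_le_exp.2 (by positivity)
          nlinarith [hw_nonneg n]

lemma aux_bessel {E : Type*} [NormedAddCommGroup E] [InnerProductSpace ℝ E] [CompleteSpace E]
    (lam : ℕ → ℝ) (hlam_pos : ∀ n, 0 < lam n)
    (ψ : ℕ → E) (hψon : Orthonormal ℝ ψ)
    (hψtot : (Submodule.span ℝ (Set.range ψ)).topologicalClosure = ⊤)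
    (v₂ : ℕ → E) (hv₂on : Orthonormal ℝ v₂) (y : ℕ → ℝ) :
    (∑' n, (⟪v₂ n, ∑' m, (Real.sqrt (lam m) * y m) • ψ m⟫ : ℝ) ^ 2)
      ≤ ∑' n, lam n * y n ^ 2 := by
  set a : ℕ → ℝ := fun n => Real.sqrt (lam n) * y n with ha
  have ha2 : ∀ n, a n ^ 2 = lam n * y n ^ 2 := by
    intro n
    rw [ha, mul_pow, Real.sq_sqrt (hlam_pos n).le]
  by_cases hsum : Summable (fun n => lam n * y n ^ 2)
  · have hsum' : Summable (fun n => a n ^ 2) := hsum.congr fun n => (ha2 n).symm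
    have hmem : Memℓp a 2 := by
      refine memℓp_gen ?_
      refine hsum'.congr fun n => ?_
      rw [ENNReal.toReal_ofNat, show ((2:ℝ)) = ((2:ℕ):ℝ) by norm_num, Real.rpow_natCast,
        Real.norm_eq_abs, sq_abs]
    let b : HilbertBasis ℕ ℝ E := HilbertBasis.mk hψon hψtot.ge
    let a' : lp (fun _ : ℕ => ℝ) 2 := ⟨a, hmem⟩
    have hx : HasSum (fun n => a n • ψ n) (b.repr.symm a') := by
      have h0 := b.hasSum_repr_symm a'
      have hbe : (fun i => a' i • b i) = fun n => a n • ψ n := by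
        funext n
        congr 1
        exact congrFun (HilbertBasis.coe_mk hψon hψtot.ge) n
      rwa [hbe] at h0
    set x := b.repr.symm a' with hxdef
    have hnorm : HasSum (fun n => a n ^ 2) (‖x‖ ^ 2) := by
      have hcont : Continuous fun z : E => ‖z‖ ^ 2 := (continuous_pow 2).comp continuous_norm
      have h1 : Filter.Tendsto (fun Sf : Finset ℕ => ‖∑ n ∈ Sf, a n • ψ n‖ ^ 2)
          Filter.atTop (nhds (‖x‖ ^ 2)) := ((hcont.tendsto x).comp hx)
      refine h1.congr ?_
      intro Sf
      rw [← real_inner_self_eq_norm_sq, hψon.inner_sum a a Sf]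
      exact Finset.sum_congr rfl fun n _ => by simp [sq]
    rw [hx.tsum_eq]
    calc (∑' n, (⟪v₂ n, x⟫ : ℝ) ^ 2) = ∑' n, ‖(⟪v₂ n, x⟫ : ℝ)‖ ^ 2 := by
          refine tsum_congr fun n => ?_
          rw [Real.norm_eq_abs, sq_abs]
      _ ≤ ‖x‖ ^ 2 := hv₂on.tsum_inner_products_le x
      _ = ∑' n, lam n * y n ^ 2 := by
          rw [← hnorm.tsum_eq]
          exact tsum_congr ha2
  · have hψ1 : ∀ n, (⟪ψ n, ψ n⟫ : ℝ) = 1 := by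
      intro n
      rw [real_inner_self_eq_norm_sq, hψon.1 n, one_pow]
    have hnsum : ¬ Summable (fun n => a n • ψ n) := by
      intro hS
      apply hsum
      have hx := hS.hasSum
      set x := ∑' n, a n • ψ n with hxdef
      have hcoeff : ∀ n, (⟪ψ n, x⟫ : ℝ) = a n := by
        intro n
        have h1 : HasSum (fun m => a m * (⟪ψ n, ψ m⟫ : ℝ)) ⟪ψ n, x⟫ := by
          have := hx.mapL (innerSL ℝ (ψ n))
          simpa using this
        have h2 : (fun m => a m * (⟪ψ n, ψ m⟫ : ℝ)) = fun m => if m = n then a n else 0 := by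
          funext m
          by_cases hmn : m = n
          · subst hmn; rw [hψ1 m, mul_one, if_pos rfl]
          · rw [hψon.2 (fun h => hmn h.symm), mul_zero, if_neg hmn]
        rw [h2] at h1
        exact h1.unique (hasSum_ite_eq n (a n))
      have h3 := hψon.inner_products_summable (x := x)
      refine h3.congr fun n => ?_
      rw [hcoeff n, Real.norm_eq_abs, sq_abs, ha2 n]
    rw [tsum_eq_zero_of_not_summable hnsum]
    simp only [inner_zero_right]
    rw [show (∑' _ : ℕ, ((0:ℝ) ^ 2)) = 0 by simp]
    exact tsum_nonneg fun n => mul_nonneg (hlam_pos n).le (sq_nonneg _)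

/-- Let `Ω = [ω_1 | ⋯ | ω_ℓ]` be a quasimatrix whose columns are
independent random functions drawn from `GP(0,K)`, with `ℓ ≥ k ≥ 1`, and let
`Ω₂ = V₂*Ω` where `V₂` has countably many orthonormal columns in `L²(D)`. Then for all
`s ≥ 1`, `P{ ‖Ω₂‖²_HS > ℓ s² Tr(K) } ≤ (s e^{−(s²−1)/2})^ℓ`. -/
theorem stmt_10 {Ωs : Type*} [MeasurableSpace Ωs] (P : Measure Ωs) [IsProbabilityMeasure P]
    {d : ℕ} (hd : 1 ≤ d) (D : Set (EuclideanSpace ℝ (Fin d))) (hD : MeasurableSet D)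
    (μ : Measure (EuclideanSpace ℝ (Fin d))) (hμ : μ = volume.restrict D)
    (K : EuclideanSpace ℝ (Fin d) → EuclideanSpace ℝ (Fin d) → ℝ)
    (hKcont : ContinuousOn (fun p : EuclideanSpace ℝ (Fin d) × EuclideanSpace ℝ (Fin d)
      => K p.1 p.2) (D ×ˢ D))
    (hKsymm : ∀ x y, K x y = K y x)
    (lam : ℕ → ℝ) (hlam_pos : ∀ n, 0 < lam n) (hlam_anti : Antitone lam)
    (hlam_sum : Summable lam)
    (ψraw : ℕ → EuclideanSpace ℝ (Fin d) → ℝ) (hψmem : ∀ n, MemLp (ψraw n) 2 μ)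
    (ψ : ℕ → Lp ℝ 2 μ) (hψdef : ∀ n, ψ n = (hψmem n).toLp (ψraw n))
    (hψon : Orthonormal ℝ ψ)
    (hψtot : (Submodule.span ℝ (Set.range ψ)).topologicalClosure = ⊤)
    (hMercer : ∀ x ∈ D, ∀ y ∈ D, K x y = ∑' n, lam n * ψraw n x * ψraw n y)
    (k l : ℕ) (hk : 1 ≤ k) (hkl : k ≤ l)
    (c : Fin l × ℕ → Ωs → ℝ) (hcmeas : ∀ i, Measurable (c i))
    (hindep : iIndepFun c P)
    (hgauss : ∀ i, Measure.map (c i) P = gaussianReal 0 1)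
    (W : Fin l → Ωs → Lp ℝ 2 μ)
    (hW : W = fun j t => ∑' n, (Real.sqrt (lam n) * c (j, n) t) • ψ n)
    (v₂ : ℕ → Lp ℝ 2 μ) (hv₂on : Orthonormal ℝ v₂)
    (s : ℝ) (hs : 1 ≤ s) :
    (P {t | (∑ j : Fin l, ∑' n, (⟪v₂ n, W j t⟫ : ℝ) ^ 2)
        > l * s ^ 2 * ∑' n, lam n}).toReal
      ≤ (s * Real.exp (-(s ^ 2 - 1) / 2)) ^ l := by
  have hs0 : (0:ℝ) < s := lt_of_lt_of_le one_pos hs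
  set T := ∑' n, lam n with hTdef
  have hT : 0 < T := Summable.tsum_pos hlam_sum (fun n => (hlam_pos n).le) 0 (hlam_pos 0)
  set θ := (1 - 1 / s ^ 2) / 2 with hθdef
  have hθ0 : 0 ≤ θ := by
    have h1 : 1 / s ^ 2 ≤ 1 := by
      rw [div_le_one (by positivity)]
      nlinarith
    rw [hθdef]; linarith
  have hw_nonneg : ∀ n, (0:ℝ) ≤ lam n / T := fun n => div_nonneg (hlam_pos n).le hT.le
  set F : Fin l → Ωs → ℝ≥0∞ := fun j t =>
    ∑' n, ENNReal.ofReal (lam n / T) * ENNReal.ofReal (Real.exp (θ * c (j, n) t ^ 2))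
    with hFdef
  have hexp_meas : ∀ p : Fin l × ℕ,
      Measurable fun t => ENNReal.ofReal (Real.exp (θ * c p t ^ 2)) := fun p =>
    (Real.measurable_exp.comp (((hcmeas p).pow_const 2).const_mul θ)).ennreal_ofReal
  have hF_meas : ∀ j, Measurable (F j) := by
    intro j
    rw [hFdef]
    exact Measurable.ennreal_tsum fun n => (hexp_meas (j, n)).const_mul _
  -- Gaussian integral of each factor
  have he_int : ∀ p : Fin l × ℕ,
      ∫⁻ t, ENNReal.ofReal (Real.exp (θ * c p t ^ 2)) ∂P = ENNReal.ofReal s := by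
    intro p
    have h1 : ∫⁻ t, ENNReal.ofReal (Real.exp (θ * c p t ^ 2)) ∂P
        = ∫⁻ x, ENNReal.ofReal (Real.exp (θ * x ^ 2)) ∂(Measure.map (c p) P) :=
      (lintegral_map ((Real.measurable_exp.comp
        ((measurable_id.pow_const 2).const_mul θ)).ennreal_ofReal) (hcmeas p)).symm
    rw [h1, hgauss p, aux_gauss_lintegral hs hθdef]
  have hF_int : ∀ j, ∫⁻ t, F j t ∂P = ENNReal.ofReal s := by
    intro j
    rw [hFdef]
    rw [lintegral_tsum (fun n => ((hexp_meas (j, n)).const_mul _).aemeasurable)]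
    calc ∑' n, ∫⁻ t, ENNReal.ofReal (lam n / T)
          * ENNReal.ofReal (Real.exp (θ * c (j, n) t ^ 2)) ∂P
        = ∑' n, ENNReal.ofReal (lam n / T) * ENNReal.ofReal s := by
          refine tsum_congr fun n => ?_
          rw [lintegral_const_mul _ (hexp_meas (j, n)), he_int (j, n)]
      _ = (∑' n, ENNReal.ofReal (lam n / T)) * ENNReal.ofReal s := ENNReal.tsum_mul_right
      _ = ENNReal.ofReal s := by
          rw [← ENNReal.ofReal_tsum_of_nonneg hw_nonneg (hlam_sum.div_const T),
            tsum_div_const, div_self hT.ne', ENNReal.ofReal_one, one_mul]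
  -- measurability of F j with respect to the sub-σ-algebra generated by row j
  have hFj_group : ∀ j : Fin l, Measurable[⨆ p ∈ {q : Fin l × ℕ | q.1 = j},
      MeasurableSpace.comap (c p) inferInstance] (F j) := by
    intro j
    rw [hFdef]
    apply Measurable.ennreal_tsum
    intro n
    have h1 : Measurable[MeasurableSpace.comap (c (j, n)) inferInstance] (c (j, n)) :=
      Measurable.of_comap_le le_rfl
    have h2 : Measurable[MeasurableSpace.comap (c (j, n)) inferInstance]
        (fun t => ENNReal.ofReal (lam n / T)
          * ENNReal.ofReal (Real.exp (θ * c (j, n) t ^ 2))) :=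
      ((Real.measurable_exp.comp ((h1.pow_const 2).const_mul θ)).ennreal_ofReal).const_mul _
    exact h2.mono (le_iSup₂ (f := fun (p : Fin l × ℕ) (_ : p ∈ {q : Fin l × ℕ | q.1 = j}) =>
      MeasurableSpace.comap (c p) inferInstance) (j, n) rfl) le_rfl
  have h_le : ∀ p : Fin l × ℕ,
      MeasurableSpace.comap (c p) inferInstance ≤ _ := fun p => (hcmeas p).comap_le
  -- factorization of the integral by independence
  have key_prod : ∀ S : Finset (Fin l),
      ∫⁻ t, ∏ j ∈ S, F j t ∂P = ∏ j ∈ S, ∫⁻ t, F j t ∂P := by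
    intro S
    induction S using Finset.induction_on with
    | empty => simp
    | @insert i S hi ih =>
      have hdisj : Disjoint {q : Fin l × ℕ | q.1 = i} {q : Fin l × ℕ | q.1 ∈ S} := by
        rw [Set.disjoint_left]
        rintro ⟨a, b⟩ ha hb
        simp only [Set.mem_setOf_eq] at ha hb
        exact hi (ha ▸ hb)
      have hind2 := indep_iSup_of_disjoint h_le hindep.iIndep hdisj
      have hmeas_prod : Measurable[⨆ p ∈ {q : Fin l × ℕ | q.1 ∈ S},
          MeasurableSpace.comap (c p) inferInstance] (fun t => ∏ j ∈ S, F j t) := by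
        apply Finset.measurable_prod
        intro j hj
        refine (hFj_group j).mono (biSup_mono fun p hp => ?_) le_rfl
        simp only [Set.mem_setOf_eq] at hp ⊢
        rw [hp]; exact hj
      have hIF : IndepFun (F i) (fun t => ∏ j ∈ S, F j t) P :=
        aux_indepFun_of_measurable hind2 (hFj_group i) hmeas_prod
      have hlhs : ∫⁻ t, ∏ j ∈ insert i S, F j t ∂P
          = ∫⁻ t, (F i * fun t => ∏ j ∈ S, F j t) t ∂P := by
        refine lintegral_congr fun t => ?_
        simp [Finset.prod_insert hi]
      rw [hlhs, lintegral_mul_eq_lintegral_mul_lintegral_of_indepFun (hF_meas i)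
        (Finset.measurable_prod _ fun j _ => hF_meas j) hIF, ih, Finset.prod_insert hi]
  -- Jensen bound
  have hjensen : ∀ (j : Fin l) (t : Ωs),
      ENNReal.ofReal (Real.exp (θ * (∑' n, lam n * c (j, n) t ^ 2) / T)) ≤ F j t := by
    intro j t
    have h0 := aux_jensen lam hlam_pos hlam_sum θ hθ0 (fun n => c (j, n) t)
    refine le_trans h0 (le_of_eq ?_)
    rw [hFdef]
    refine tsum_congr fun n => ?_
    rw [ENNReal.ofReal_mul (hw_nonneg n)]
  -- Bessel bound
  have hbessel : ∀ (j : Fin l) (t : Ωs),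
      (∑' n, (⟪v₂ n, W j t⟫ : ℝ) ^ 2) ≤ ∑' n, lam n * c (j, n) t ^ 2 := by
    intro j t
    have h0 := aux_bessel lam hlam_pos ψ hψon hψtot v₂ hv₂on (fun n => c (j, n) t)
    rw [hW]
    exact h0
  set M := ENNReal.ofReal (Real.exp (θ * (l * s ^ 2))) with hMdef
  -- event inclusion
  have hsub : {t | (∑ j : Fin l, ∑' n, (⟪v₂ n, W j t⟫ : ℝ) ^ 2) > l * s ^ 2 * T}
      ⊆ {t | M ≤ ∏ j : Fin l, F j t} := by
    intro t ht
    simp only [Set.mem_setOf_eq] at ht ⊢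
    have h1 : (l : ℝ) * s ^ 2 * T < ∑ j : Fin l, ∑' n, lam n * c (j, n) t ^ 2 :=
      lt_of_lt_of_le ht (Finset.sum_le_sum fun j _ => hbessel j t)
    have h2 : θ * (l * s ^ 2) ≤ (θ / T) * ∑ j : Fin l, ∑' n, lam n * c (j, n) t ^ 2 := by
      have h3 := mul_le_mul_of_nonneg_left h1.le (div_nonneg hθ0 hT.le)
      calc θ * (l * s ^ 2) = (θ / T) * ((l : ℝ) * s ^ 2 * T) := by
            field_simp
        _ ≤ _ := h3
    calc M ≤ ENNReal.ofReal
          (Real.exp ((θ / T) * ∑ j : Fin l, ∑' n, lam n * c (j, n) t ^ 2)) := by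
          rw [hMdef]
          exact ENNReal.ofReal_le_ofReal (Real.exp_le_exp.2 h2)
      _ = ∏ j : Fin l,
          ENNReal.ofReal (Real.exp (θ * (∑' n, lam n * c (j, n) t ^ 2) / T)) := by
          rw [← ENNReal.ofReal_prod_of_nonneg (fun j _ => (Real.exp_pos _).le),
            ← Real.exp_sum]
          congr 1
          congr 1
          rw [Finset.mul_sum]
          exact Finset.sum_congr rfl fun j _ => by ring
      _ ≤ ∏ j : Fin l, F j t := Finset.prod_le_prod' fun j _ => hjensen j t
  -- Chernoff
  have hg_meas : Measurable fun t => ∏ j : Fin l, F j t :=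
    Finset.measurable_prod _ fun j _ => hF_meas j
  have hM0 : M ≠ 0 := by
    rw [hMdef]; exact (ENNReal.ofReal_pos.2 (Real.exp_pos _)).ne'
  have hMtop : M ≠ ⊤ := by rw [hMdef]; exact ENNReal.ofReal_ne_top
  have hcher := meas_ge_le_lintegral_div (μ := P) hg_meas.aemeasurable hM0 hMtop
  have hprod : ∫⁻ t, ∏ j : Fin l, F j t ∂P = ENNReal.ofReal s ^ l := by
    calc ∫⁻ t, ∏ j : Fin l, F j t ∂P = ∏ j : Fin l, ∫⁻ t, F j t ∂P := key_prod Finset.univ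
      _ = ∏ _j : Fin l, ENNReal.ofReal s := Finset.prod_congr rfl fun j _ => hF_int j
      _ = ENNReal.ofReal s ^ l := by
          rw [Finset.prod_const, Finset.card_univ, Fintype.card_fin]
  have hPA : P {t | (∑ j : Fin l, ∑' n, (⟪v₂ n, W j t⟫ : ℝ) ^ 2) > l * s ^ 2 * T}
      ≤ ENNReal.ofReal s ^ l / M := by
    refine le_trans (measure_mono hsub) (le_trans hcher ?_)
    rw [hprod]
  have hfinal : ENNReal.ofReal s ^ l / M
      = ENNReal.ofReal ((s * Real.exp (-(s ^ 2 - 1) / 2)) ^ l) := by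
    rw [hMdef, ← ENNReal.ofReal_pow hs0.le, ← ENNReal.ofReal_div_of_pos (Real.exp_pos _)]
    congr 1
    have hθs : θ * s ^ 2 = (s ^ 2 - 1) / 2 := by
      rw [hθdef]; field_simp
    rw [mul_pow, ← Real.exp_nat_mul, div_eq_mul_inv, ← Real.exp_neg]
    congr 1
    rw [Real.exp_eq_exp]
    linear_combination (-(l : ℝ)) * hθs
  refine ENNReal.toReal_le_of_le_ofReal (by positivity) ?_
  rw [← hfinal]
  exact hPA
end

section
/- Let n ≥ 1 and consider the level-n hierarchical partition of [0,1]³ into dyadic cubes of side length 2^{−n}, with non-admissible set P_nonadm(n) consisting of all pairs of level-n cubes whose index vectors differ by at most 1 in each coordinate. Suppose G : [0,1]³ × [0,1]³ → ℝ is measurable and satisfies |G(x,y)| ≤ c M / ‖x − y‖₂ for almost every x ≠ y, for constants c, M ≥ 0. Then ∑_{τ×σ ∈ P_nonadm(n)} ‖G‖_{L²(τ×σ)}² ≤ 54 π² (6 + √3) c² 2^{−n} M². -/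
open MeasureTheory
open Metric Set

/-- The dyadic cube of level `n` of `[0,1]³` with index vector `j`,
where `2ⁿ ≤ jᵢ ≤ 2^{n+1} − 1`: the product of the intervals
`I_{jᵢ} = [(jᵢ − 2ⁿ)/2ⁿ, (jᵢ − 2ⁿ + 1)/2ⁿ]`. -/
def dyadicCube (n : ℕ) (j : Fin 3 → ℕ) : Set (EuclideanSpace ℝ (Fin 3)) :=
  {x | ∀ i : Fin 3,
    ((j i : ℝ) - 2 ^ n) / 2 ^ n ≤ x i ∧ x i ≤ ((j i : ℝ) - 2 ^ n + 1) / 2 ^ n}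

/-- The set of non-admissible pairs of index vectors at level `n`: indices
`2ⁿ ≤ jᵢ, ĵᵢ ≤ 2^{n+1} − 1` with `|jᵢ − ĵᵢ| ≤ 1` for all `i`. -/
noncomputable def nonAdmPairs (n : ℕ) : Finset ((Fin 3 → ℕ) × (Fin 3 → ℕ)) :=
  ((Fintype.piFinset fun _ : Fin 3 => Finset.Icc (2 ^ n) (2 ^ (n + 1) - 1)) ×ˢ
      (Fintype.piFinset fun _ : Fin 3 => Finset.Icc (2 ^ n) (2 ^ (n + 1) - 1))).filter
    (fun p => ∀ i : Fin 3, |(p.1 i : ℤ) - (p.2 i : ℤ)| ≤ 1)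

/-- The unit cube `[0,1]³`. -/
def unitCube : Set (EuclideanSpace ℝ (Fin 3)) := {x | ∀ i : Fin 3, 0 ≤ x i ∧ x i ≤ 1}

local notation "E3" => EuclideanSpace ℝ (Fin 3)

lemma vol_box (a b : Fin 3 → ℝ) :
    volume {x : E3 | ∀ i, a i ≤ x i ∧ x i ≤ b i} = ∏ i, ENNReal.ofReal (b i - a i) := by
  have hpre : {x : E3 | ∀ i, a i ≤ x i ∧ x i ≤ b i} =
      (MeasurableEquiv.toLp 2 (Fin 3 → ℝ)).symm ⁻¹' (Set.univ.pi fun i => Set.Icc (a i) (b i)) := by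
    ext x
    simp only [Set.mem_setOf_eq, Set.mem_preimage, Set.mem_pi, Set.mem_univ, true_implies,
      Set.mem_Icc]
    exact ⟨fun h i => h i, fun h i => h i⟩
  rw [hpre,
    (EuclideanSpace.volume_preserving_symm_measurableEquiv_toLp (Fin 3)).measure_preimage
      (MeasurableSet.univ_pi (fun i => measurableSet_Icc)).nullMeasurableSet,
    volume_pi_pi]
  simp [Real.volume_Icc]

lemma coord_le_norm (x : E3) (i : Fin 3) : |x i| ≤ ‖x‖ := by
  rw [EuclideanSpace.norm_eq, ← Real.sqrt_sq_eq_abs (x i)]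
  apply Real.sqrt_le_sqrt
  simpa [Real.norm_eq_abs, sq_abs] using Finset.single_le_sum (f := fun j => x j ^ 2)
    (fun j _ => sq_nonneg (x j)) (Finset.mem_univ i)

lemma vol_ball_le (x : E3) {r : ℝ} (hr : 0 ≤ r) :
    volume (ball x r) ≤ ENNReal.ofReal (8 * r ^ 3) := by
  rw [Measure.addHaar_ball volume x hr, finrank_euclideanSpace_fin]
  have h1 : volume (ball (0 : E3) 1) ≤ ENNReal.ofReal 8 := by
    have hsub : ball (0 : E3) 1 ⊆ {y : E3 | ∀ i, (-1 : ℝ) ≤ y i ∧ y i ≤ 1} := by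
      intro y hy i
      have := (coord_le_norm y i).trans_lt (by simpa [mem_ball, dist_eq_norm] using hy)
      exact ⟨by linarith [abs_le.1 this.le], (abs_le.1 this.le).2⟩
    calc volume (ball (0 : E3) 1) ≤ _ := measure_mono hsub
    _ = ENNReal.ofReal 8 := by
        rw [vol_box]
        norm_num [← ENNReal.ofReal_pow]
  calc ENNReal.ofReal (r ^ 3) * volume (ball (0 : E3) 1)
      ≤ ENNReal.ofReal (r ^ 3) * ENNReal.ofReal 8 := by gcongr
    _ = ENNReal.ofReal (8 * r ^ 3) := by
        rw [← ENNReal.ofReal_mul (by positivity)]; ring_nf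

lemma inner_bound (x : E3) (σ : Set E3) {s : ℝ} (hs : 0 < s)
    (hσ : volume σ ≤ ENNReal.ofReal (s ^ 3)) :
    ∫⁻ y in σ, ENNReal.ofReal ((‖x - y‖ ^ 2)⁻¹) ≤ ENNReal.ofReal (17 * s) := by
  have hmble : Measurable fun y : E3 => (‖x - y‖ ^ 2)⁻¹ :=
    (((measurable_const.sub measurable_id).norm.pow_const 2)).inv
  rw [lintegral_eq_lintegral_meas_lt _ (Filter.Eventually.of_forall fun y => by positivity)
    hmble.aemeasurable]
  set t₀ : ℝ := (s ^ 2)⁻¹ with ht₀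
  have ht₀pos : 0 < t₀ := by positivity
  have hsplit : Set.Ioi (0 : ℝ) = Set.Ioc 0 t₀ ∪ Set.Ioi t₀ :=
    (Set.Ioc_union_Ioi_eq_Ioi ht₀pos.le).symm
  rw [hsplit, lintegral_union measurableSet_Ioi (Set.Ioc_disjoint_Ioi le_rfl)]
  have piece1 : ∫⁻ t in Set.Ioc 0 t₀,
      (volume.restrict σ) {y : E3 | t < (‖x - y‖ ^ 2)⁻¹} ≤ ENNReal.ofReal s := by
    calc ∫⁻ t in Set.Ioc 0 t₀, (volume.restrict σ) {y : E3 | t < (‖x - y‖ ^ 2)⁻¹}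
        ≤ ∫⁻ _ in Set.Ioc 0 t₀, ENNReal.ofReal (s ^ 3) := by
          apply setLIntegral_mono measurable_const
          intro t _
          calc (volume.restrict σ) {y : E3 | t < (‖x - y‖ ^ 2)⁻¹}
              ≤ (volume.restrict σ) Set.univ := measure_mono (Set.subset_univ _)
            _ = volume σ := by simp
            _ ≤ ENNReal.ofReal (s ^ 3) := hσ
      _ = ENNReal.ofReal (s ^ 3) * ENNReal.ofReal t₀ := by
          rw [setLIntegral_const, Real.volume_Ioc, sub_zero]
      _ = ENNReal.ofReal (s ^ 3 * t₀) := (ENNReal.ofReal_mul (by positivity)).symm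
      _ = ENNReal.ofReal s := by
          congr 1
          field_simp [ht₀]
          rw [ht₀, mul_inv_cancel₀ (by positivity)]
  have piece2 : ∫⁻ t in Set.Ioi t₀,
      (volume.restrict σ) {y : E3 | t < (‖x - y‖ ^ 2)⁻¹} ≤ ENNReal.ofReal (16 * s) := by
    have hb : ∀ t ∈ Set.Ioi t₀, (volume.restrict σ) {y : E3 | t < (‖x - y‖ ^ 2)⁻¹}
        ≤ ENNReal.ofReal (8 * t ^ (-(3/2) : ℝ)) := by
      intro t ht
      have htpos : 0 < t := ht₀pos.trans ht
      have hsub : {y : E3 | t < (‖x - y‖ ^ 2)⁻¹} ⊆ ball x (Real.sqrt t⁻¹) := by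
        intro y hy
        have hy' : t < (‖x - y‖ ^ 2)⁻¹ := hy
        have hinvpos : 0 < (‖x - y‖ ^ 2)⁻¹ := htpos.trans hy'
        have hd2pos : 0 < ‖x - y‖ ^ 2 := by
          by_contra h
          have : ‖x - y‖ ^ 2 = 0 := le_antisymm (not_lt.1 h) (sq_nonneg _)
          rw [this] at hinvpos; simp at hinvpos
        have hlt : ‖x - y‖ ^ 2 < t⁻¹ := by
          rw [lt_inv_comm₀ htpos hd2pos] at hy'
          exact hy'
        have : ‖x - y‖ < Real.sqrt t⁻¹ := (Real.lt_sqrt (norm_nonneg _)).2 hlt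
        simpa [mem_ball, dist_eq_norm, norm_sub_rev] using this
      calc (volume.restrict σ) {y : E3 | t < (‖x - y‖ ^ 2)⁻¹}
          ≤ volume {y : E3 | t < (‖x - y‖ ^ 2)⁻¹} := Measure.restrict_le_self _
        _ ≤ volume (ball x (Real.sqrt t⁻¹)) := measure_mono hsub
        _ ≤ ENNReal.ofReal (8 * Real.sqrt t⁻¹ ^ 3) := vol_ball_le x (Real.sqrt_nonneg _)
        _ = ENNReal.ofReal (8 * t ^ (-(3/2) : ℝ)) := by
            congr 1
            rw [Real.sqrt_eq_rpow, ← Real.rpow_natCast (t⁻¹ ^ ((1:ℝ)/2)) 3,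
              ← Real.rpow_mul (inv_nonneg.2 htpos.le), Real.inv_rpow htpos.le,
              ← Real.rpow_neg htpos.le]
            norm_num
    calc ∫⁻ t in Set.Ioi t₀, (volume.restrict σ) {y : E3 | t < (‖x - y‖ ^ 2)⁻¹}
        ≤ ∫⁻ t in Set.Ioi t₀, ENNReal.ofReal (8 * t ^ (-(3/2) : ℝ)) := by
          apply setLIntegral_mono
            (ENNReal.measurable_ofReal.comp ((measurable_id.pow_const (-(3/2) : ℝ)).const_mul 8)) hb
      _ = ENNReal.ofReal (∫ t in Set.Ioi t₀, 8 * t ^ (-(3/2) : ℝ)) := by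
          rw [ofReal_integral_eq_lintegral_ofReal
            ((integrableOn_Ioi_rpow_of_lt (by norm_num) ht₀pos).const_mul 8)
            ((ae_restrict_mem measurableSet_Ioi).mono fun t ht => by
              have : (0:ℝ) < t := ht₀pos.trans ht
              positivity)]
      _ ≤ ENNReal.ofReal (16 * s) := by
          apply ENNReal.ofReal_le_ofReal
          rw [MeasureTheory.integral_const_mul, integral_Ioi_rpow_of_lt (by norm_num) ht₀pos]
          have ht₀s : t₀ ^ (-(3/2) + 1 : ℝ) = s := by
            rw [ht₀, ← Real.rpow_natCast s 2, ← Real.rpow_neg hs.le,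
              ← Real.rpow_mul hs.le]
            norm_num
          rw [ht₀s]
          norm_num
          linarith
  calc _ ≤ ENNReal.ofReal s + ENNReal.ofReal (16 * s) := add_le_add piece1 piece2
    _ = ENNReal.ofReal (17 * s) := by rw [← ENNReal.ofReal_add hs.le (by positivity)]; ring_nf

lemma vol_dyadicCube (n : ℕ) (j : Fin 3 → ℕ) :
    volume (dyadicCube n j) ≤ ENNReal.ofReal (((2:ℝ) ^ n)⁻¹ ^ 3) := by
  have : dyadicCube n j = {x : E3 | ∀ i,
      (fun i => ((j i : ℝ) - 2 ^ n) / 2 ^ n) i ≤ x i ∧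
      x i ≤ (fun i => ((j i : ℝ) - 2 ^ n + 1) / 2 ^ n) i} := rfl
  rw [this, vol_box]
  have h2 : (0:ℝ) < 2 ^ n := by positivity
  have hval : ∀ i : Fin 3, ((j i : ℝ) - 2 ^ n + 1) / 2 ^ n - ((j i : ℝ) - 2 ^ n) / 2 ^ n
      = ((2:ℝ) ^ n)⁻¹ := by intro i; field_simp; ring
  simp only [hval]
  rw [Finset.prod_const, ← ENNReal.ofReal_pow (by positivity)]
  simp

lemma dyadicCube_subset_unitCube {n : ℕ} {j : Fin 3 → ℕ}
    (hj : ∀ i, 2 ^ n ≤ j i ∧ j i ≤ 2 ^ (n + 1) - 1) :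
    dyadicCube n j ⊆ unitCube := by
  intro x hx i
  have h2 : (0:ℝ) < 2 ^ n := by positivity
  obtain ⟨hlo, hhi⟩ := hx i
  obtain ⟨hjlo, hjhi⟩ := hj i
  have hjlo' : (2:ℝ) ^ n ≤ (j i : ℝ) := by exact_mod_cast Nat.cast_le.2 hjlo
  have hjhi' : (j i : ℝ) + 1 ≤ 2 ^ (n + 1) := by
    have : j i + 1 ≤ 2 ^ (n + 1) := by
      have : 1 ≤ 2 ^ (n+1) := Nat.one_le_two_pow
      omega
    exact_mod_cast this
  constructor
  · apply le_trans _ hlo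
    apply div_nonneg _ h2.le
    linarith
  · apply le_trans hhi
    rw [div_le_one h2]
    have : (2:ℝ) ^ (n+1) = 2 ^ n * 2 := by ring
    nlinarith [this]

lemma card_nonAdmPairs (n : ℕ) : (nonAdmPairs n).card ≤ 27 * 8 ^ n := by
  classical
  have hle : (nonAdmPairs n).card ≤
      ((Fintype.piFinset fun _ : Fin 3 => Finset.Icc (2 ^ n) (2 ^ (n + 1) - 1)) ×ˢ
        (Fintype.piFinset fun _ : Fin 3 => Finset.Icc (-1 : ℤ) 1)).card := by
    apply Finset.card_le_card_of_injOn
      (fun p => (p.1, fun i => (p.2 i : ℤ) - (p.1 i : ℤ)))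
    · intro p hp
      simp only [Finset.mem_coe, nonAdmPairs, Finset.mem_filter, Finset.mem_product] at hp
      obtain ⟨⟨h1, _⟩, h3⟩ := hp
      rw [Finset.mem_coe, Finset.mem_product]
      refine ⟨h1, ?_⟩
      rw [Fintype.mem_piFinset]
      intro i
      dsimp only
      rw [Finset.mem_Icc]
      have := abs_le.1 (h3 i)
      omega
    · intro p hp q hq heq
      simp only [Prod.mk.injEq] at heq
      obtain ⟨h1, h2⟩ := heq
      have h2' : ∀ i, (p.2 i : ℤ) - (p.1 i : ℤ) = (q.2 i : ℤ) - (q.1 i : ℤ) :=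
        fun i => congrFun h2 i
      have : p.2 = q.2 := by
        funext i
        have := h2' i
        rw [h1] at this
        omega
      exact Prod.ext h1 this
  calc (nonAdmPairs n).card ≤ _ := hle
    _ ≤ 27 * 8 ^ n := by
      rw [Finset.card_product, Fintype.card_piFinset, Fintype.card_piFinset]
      have h3 : (Finset.Icc (-1 : ℤ) 1).card = 3 := by rw [Int.card_Icc]; rfl
      have h1 : (Finset.Icc (2 ^ n) (2 ^ (n + 1) - 1)).card = 2 ^ n := by
        rw [Nat.card_Icc]
        have : (1:ℕ) ≤ 2 ^ (n+1) := Nat.one_le_two_pow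
        have : 2 ^ (n+1) = 2 * 2 ^ n := by ring
        omega
      rw [h3, h1]
      simp only [Finset.prod_const, Finset.card_univ, Fintype.card_fin]
      have h8 : (2 ^ n) ^ 3 = 8 ^ n := by
        rw [← pow_mul, mul_comm, pow_mul]; norm_num
      rw [h8]
      exact le_of_eq (by ring)

lemma pair_bound (G : E3 → E3 → ℝ)
    (hGmeas : Measurable fun p : E3 × E3 => G p.1 p.2)
    (c M : ℝ)
    (τ σ : Set E3) {s : ℝ} (hs : 0 < s)
    (hτ : volume τ ≤ ENNReal.ofReal (s ^ 3)) (hσ : volume σ ≤ ENNReal.ofReal (s ^ 3))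
    (hGb : ∀ᵐ q ∂(volume.restrict (τ ×ˢ σ)),
      q.1 ≠ q.2 → |G q.1 q.2| ≤ c * M / ‖q.1 - q.2‖) :
    ∫ q in τ ×ˢ σ, (G q.1 q.2) ^ 2 ≤ 17 * (c * M) ^ 2 * s ^ 4 := by
  have hne : ∀ᵐ q ∂(volume.restrict (τ ×ˢ σ)), q.1 ≠ q.2 := by
    have hdiag : (volume : Measure (E3 × E3)) (Set.diagonal E3) = 0 := by
      rw [Measure.volume_eq_prod,
        Measure.prod_apply (isClosed_diagonal.measurableSet)]
      have h0 : ∀ x : E3, (Prod.mk x ⁻¹' Set.diagonal E3) = {x} := by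
        intro x; ext y; simp [Set.mem_diagonal_iff, eq_comm]
      simp [h0, measure_singleton]
    rw [Filter.eventually_iff, mem_ae_iff]
    have hset : {q : E3 × E3 | q.1 ≠ q.2}ᶜ = Set.diagonal E3 := by
      ext q; simp [Set.mem_diagonal_iff]
    rw [hset]
    exact le_antisymm ((Measure.restrict_apply_le _ _).trans hdiag.le) zero_le
  have hGsm : AEStronglyMeasurable (fun q : E3 × E3 => G q.1 q.2 ^ 2)
      (volume.restrict (τ ×ˢ σ)) := (hGmeas.pow_const 2).aestronglyMeasurable
  rw [integral_eq_lintegral_of_nonneg_ae (Filter.Eventually.of_forall fun q => sq_nonneg _)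
    hGsm]
  have hmd : Measurable fun q : E3 × E3 => ENNReal.ofReal ((‖q.1 - q.2‖ ^ 2)⁻¹) :=
    ENNReal.measurable_ofReal.comp (((measurable_fst.sub measurable_snd).norm.pow_const 2).inv)
  have key : ∫⁻ q in τ ×ˢ σ, ENNReal.ofReal (G q.1 q.2 ^ 2)
      ≤ ENNReal.ofReal (17 * (c * M) ^ 2 * s ^ 4) := by
    calc ∫⁻ q in τ ×ˢ σ, ENNReal.ofReal (G q.1 q.2 ^ 2)
        ≤ ∫⁻ q in τ ×ˢ σ,
            ENNReal.ofReal ((c * M) ^ 2) * ENNReal.ofReal ((‖q.1 - q.2‖ ^ 2)⁻¹) := by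
          apply lintegral_mono_ae
          filter_upwards [hGb, hne] with q hq hne'
          have h1 : |G q.1 q.2| ≤ c * M / ‖q.1 - q.2‖ := hq hne'
          have hd : 0 < ‖q.1 - q.2‖ := norm_pos_iff.2 (sub_ne_zero.2 hne')
          rw [← ENNReal.ofReal_mul (by positivity)]
          apply ENNReal.ofReal_le_ofReal
          have : G q.1 q.2 ^ 2 = |G q.1 q.2| ^ 2 := (sq_abs _).symm
          rw [this]
          calc |G q.1 q.2| ^ 2 ≤ (c * M / ‖q.1 - q.2‖) ^ 2 := by
                apply pow_le_pow_left₀ (abs_nonneg _) h1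
            _ = (c * M) ^ 2 * (‖q.1 - q.2‖ ^ 2)⁻¹ := by
                rw [div_pow, div_eq_mul_inv]
      _ = ENNReal.ofReal ((c * M) ^ 2) *
            ∫⁻ q in τ ×ˢ σ, ENNReal.ofReal ((‖q.1 - q.2‖ ^ 2)⁻¹) := by
          rw [lintegral_const_mul' _ _ ENNReal.ofReal_ne_top]
      _ ≤ ENNReal.ofReal ((c * M) ^ 2) * ENNReal.ofReal (17 * s * s ^ 3) := by
          gcongr
          have hrw : (volume : Measure (E3 × E3)).restrict (τ ×ˢ σ)
              = (volume.restrict τ).prod (volume.restrict σ) := by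
            rw [Measure.prod_restrict, ← Measure.volume_eq_prod]
          rw [hrw, lintegral_prod _ hmd.aemeasurable]
          calc ∫⁻ x in τ, ∫⁻ y in σ, ENNReal.ofReal ((‖x - y‖ ^ 2)⁻¹)
              ≤ ∫⁻ _ in τ, ENNReal.ofReal (17 * s) :=
                lintegral_mono fun x => inner_bound x σ hs hσ
            _ = ENNReal.ofReal (17 * s) * volume τ := by
                rw [setLIntegral_const]
            _ ≤ ENNReal.ofReal (17 * s) * ENNReal.ofReal (s ^ 3) := by gcongr
            _ = ENNReal.ofReal (17 * s * s ^ 3) :=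
                (ENNReal.ofReal_mul (by positivity)).symm
      _ = ENNReal.ofReal (17 * (c * M) ^ 2 * s ^ 4) := by
          rw [← ENNReal.ofReal_mul (by positivity)]
          congr 1
          ring
  calc (∫⁻ q in τ ×ˢ σ, ENNReal.ofReal (G q.1 q.2 ^ 2)).toReal
      ≤ (ENNReal.ofReal (17 * (c * M) ^ 2 * s ^ 4)).toReal :=
        ENNReal.toReal_mono ENNReal.ofReal_ne_top key
    _ = 17 * (c * M) ^ 2 * s ^ 4 := ENNReal.toReal_ofReal (by positivity)

/-- If `G : [0,1]³ × [0,1]³ → ℝ` is measurable and satisfies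
`|G(x,y)| ≤ c M / ‖x − y‖₂` almost everywhere for `x ≠ y`, then the squared `L²`-norm of
`G` over all non-admissible pairs of level-`n` dyadic cubes is at most
`54 π² (6 + √3) c² 2^{−n} M²`. -/
theorem stmt_16 (n : ℕ) (hn : 1 ≤ n)
    (G : EuclideanSpace ℝ (Fin 3) → EuclideanSpace ℝ (Fin 3) → ℝ)
    (hGmeas : Measurable fun p : EuclideanSpace ℝ (Fin 3) × EuclideanSpace ℝ (Fin 3) =>
      G p.1 p.2)
    (c M : ℝ) (hc : 0 ≤ c) (hM : 0 ≤ M)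
    (hGbound : ∀ᵐ p ∂(volume.restrict (unitCube ×ˢ unitCube)),
      p.1 ≠ p.2 → |G p.1 p.2| ≤ c * M / ‖p.1 - p.2‖) :
    ∑ p ∈ nonAdmPairs n, ∫ q in (dyadicCube n p.1) ×ˢ (dyadicCube n p.2), (G q.1 q.2) ^ 2
      ≤ 54 * Real.pi ^ 2 * (6 + Real.sqrt 3) * c ^ 2 * (2 : ℝ) ^ (-(n : ℝ)) * M ^ 2 := by
  have hx : (0:ℝ) < 2 ^ n := by positivity
  set s : ℝ := ((2:ℝ) ^ n)⁻¹ with hsdef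
  have hs : 0 < s := by positivity
  have hterm : ∀ p ∈ nonAdmPairs n,
      ∫ q in (dyadicCube n p.1) ×ˢ (dyadicCube n p.2), (G q.1 q.2) ^ 2
        ≤ 17 * (c * M) ^ 2 * s ^ 4 := by
    intro p hp
    rw [nonAdmPairs, Finset.mem_filter, Finset.mem_product] at hp
    obtain ⟨⟨h1, h2⟩, _⟩ := hp
    have hb1 : ∀ i, 2 ^ n ≤ p.1 i ∧ p.1 i ≤ 2 ^ (n + 1) - 1 := by
      intro i
      have := (Fintype.mem_piFinset).1 h1 i
      exact Finset.mem_Icc.1 this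
    have hb2 : ∀ i, 2 ^ n ≤ p.2 i ∧ p.2 i ≤ 2 ^ (n + 1) - 1 := by
      intro i
      have := (Fintype.mem_piFinset).1 h2 i
      exact Finset.mem_Icc.1 this
    have hres : volume.restrict ((dyadicCube n p.1) ×ˢ (dyadicCube n p.2))
        ≤ volume.restrict (unitCube ×ˢ unitCube) :=
      Measure.restrict_mono
        (Set.prod_mono (dyadicCube_subset_unitCube hb1) (dyadicCube_subset_unitCube hb2))
        le_rfl
    exact pair_bound G hGmeas c M _ _ hs (vol_dyadicCube n p.1) (vol_dyadicCube n p.2)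
      (hGbound.filter_mono (ae_mono hres))
  have hB : (0:ℝ) ≤ 17 * (c * M) ^ 2 * s ^ 4 := by positivity
  have hrpow : (2:ℝ) ^ (-(n:ℝ)) = s := by
    rw [hsdef, ← Real.rpow_natCast 2 n, ← Real.rpow_neg (by norm_num)]
  have key : (459:ℝ) ≤ 54 * Real.pi ^ 2 * (6 + Real.sqrt 3) := by
    have hpi : 3 < Real.pi := Real.pi_gt_three
    have hs3 : 0 ≤ Real.sqrt 3 := Real.sqrt_nonneg 3
    nlinarith [sq_nonneg (Real.pi - 3)]
  calc ∑ p ∈ nonAdmPairs n, ∫ q in (dyadicCube n p.1) ×ˢ (dyadicCube n p.2), (G q.1 q.2) ^ 2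
      ≤ (nonAdmPairs n).card • (17 * (c * M) ^ 2 * s ^ 4) :=
        Finset.sum_le_card_nsmul _ _ _ hterm
    _ = ((nonAdmPairs n).card : ℝ) * (17 * (c * M) ^ 2 * s ^ 4) := by
        rw [nsmul_eq_mul]
    _ ≤ ((27 * 8 ^ n : ℕ) : ℝ) * (17 * (c * M) ^ 2 * s ^ 4) := by
        apply mul_le_mul_of_nonneg_right _ hB
        exact_mod_cast card_nonAdmPairs n
    _ = 459 * (c * M) ^ 2 * s := by
        have h8 : ((8:ℝ)) ^ n = ((2:ℝ) ^ n) ^ 3 := by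
          rw [show (8:ℝ) = 2 ^ 3 by norm_num, ← pow_mul, mul_comm, pow_mul]
        push_cast
        rw [h8, hsdef]
        field_simp
        ring
    _ ≤ 54 * Real.pi ^ 2 * (6 + Real.sqrt 3) * c ^ 2 * (2 : ℝ) ^ (-(n : ℝ)) * M ^ 2 := by
        rw [hrpow]
        calc 459 * (c * M) ^ 2 * s = 459 * (c ^ 2 * s * M ^ 2) := by ring
          _ ≤ (54 * Real.pi ^ 2 * (6 + Real.sqrt 3)) * (c ^ 2 * s * M ^ 2) :=
            mul_le_mul_of_nonneg_right key (by positivity)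
          _ = 54 * Real.pi ^ 2 * (6 + Real.sqrt 3) * c ^ 2 * s * M ^ 2 := by ring
end
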